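/- Let G be a finite group and P a p-subgroup of G for some prime p. Then P is s-permutable in G if and only if O^p(G) ≤ N_G(P), where O^p(G) is the smallest normal subgroup of G whose quotient is a p-group. -/

import Mathlib

open Pointwise

/-- A subgroup `H` of `G` is s-permutable (s-quasinormal) in `G` if `H` permutes with
every Sylow subgroup of `G`. -/
def IsSPermutable {G : Type*} [Group G] (H : Subgroup G) : Prop :=
  ∀ q : ℕ, q.Prime → ∀ Q : Sylow q G,
    (H : Set G) * ((Q : Subgroup G) : Set G) = ((Q : Subgroup G) : Set G) * (H : Set G)

/-- `O^p(G)`: the smallest normal subgroup of `G` whose quotient is a `p`-group,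
realized as the infimum of all normal subgroups of `p`-power index. -/
def pResidual (p : ℕ) (G : Type*) [Group G] : Subgroup G :=
  sInf {N : Subgroup G | N.Normal ∧ ∃ k : ℕ, N.index = p ^ k}


lemma coe_sup_of_mul_comm {G : Type*} [Group G] {H K : Subgroup G}
    (h : (H : Set G) * (K : Set G) = (K : Set G) * (H : Set G)) :
    ((H ⊔ K : Subgroup G) : Set G) = (H : Set G) * (K : Set G) := by
  let J : Subgroup G :=
  { carrier := (H : Set G) * (K : Set G)
    one_mem' := ⟨1, H.one_mem, 1, K.one_mem, one_mul 1⟩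
    mul_mem' := by
      rintro a b ⟨a1, ha1, a2, ha2, rfl⟩ ⟨b1, hb1, b2, hb2, rfl⟩
      have hmem : (a2 : G) * b1 ∈ (K : Set G) * (H : Set G) := ⟨a2, ha2, b1, hb1, rfl⟩
      rw [← h] at hmem
      obtain ⟨c1, hc1, c2, hc2, hc⟩ := hmem
      refine ⟨a1 * c1, H.mul_mem ha1 hc1, c2 * b2, K.mul_mem hc2 hb2, ?_⟩
      show a1 * c1 * (c2 * b2) = a1 * a2 * (b1 * b2)
      have hc' : c1 * c2 = a2 * b1 := hc
      rw [mul_assoc a1, ← mul_assoc c1, hc']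
      group
    inv_mem' := by
      rintro a ⟨a1, ha1, a2, ha2, rfl⟩
      have hmem : a2⁻¹ * a1⁻¹ ∈ (K : Set G) * (H : Set G) :=
        ⟨a2⁻¹, K.inv_mem ha2, a1⁻¹, H.inv_mem ha1, rfl⟩
      rw [← h] at hmem
      simpa [mul_inv_rev] using hmem }
  have hHJ : H ≤ J := fun x hx => ⟨x, hx, 1, K.one_mem, mul_one x⟩
  have hKJ : K ≤ J := fun x hx => ⟨1, H.one_mem, x, hx, one_mul x⟩
  have hJle : (J : Set G) ⊆ ((H ⊔ K : Subgroup G) : Set G) := by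
    rintro x ⟨a, ha, b, hb, rfl⟩
    exact mul_mem (Subgroup.mem_sup_left ha) (Subgroup.mem_sup_right hb)
  have : H ⊔ K = J := le_antisymm (sup_le hHJ hKJ) hJle
  rw [this]; rfl

lemma card_coe_mul_dvd {G : Type*} [Group G] [Finite G] (H K : Subgroup G) :
    Nat.card ((H : Set G) * (K : Set G) : Set G) ∣ Nat.card H * Nat.card K := by
  rw [Subgroup.card_mul_eq_card_subgroup_mul_card_quotient K (H : Set G), mul_comm]
  refine Nat.mul_dvd_mul ?_ dvd_rfl
  have himg : ((H : Set G)).image ((↑) : G → G ⧸ K)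
      = MulAction.orbit H ((1 : G) : G ⧸ K) := by
    ext x
    constructor
    · rintro ⟨g, hg, rfl⟩
      exact ⟨⟨g, hg⟩, by change ((g * 1 : G) : G ⧸ K) = g; rw [mul_one]⟩
    · rintro ⟨⟨g, hg⟩, rfl⟩
      exact ⟨g, hg, by change (g : G ⧸ K) = ((g * 1 : G) : G ⧸ K); rw [mul_one]⟩
  rw [himg, Nat.card_congr (MulAction.orbitEquivQuotientStabilizer H ((1 : G) : G ⧸ K))]
  exact Subgroup.card_quotient_dvd_card _

lemma coe_mul_comm_of_le_normalizer {G : Type*} [Group G] {P Q : Subgroup G}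
    (h : Q ≤ Subgroup.normalizer (P : Set G)) : (P : Set G) * Q = (Q : Set G) * P := by
  ext x
  constructor
  · rintro ⟨a, ha, b, hb, rfl⟩
    refine ⟨b, hb, b⁻¹ * a * b, ?_, by group⟩
    have := (Subgroup.mem_normalizer_iff.mp ((Subgroup.normalizer (P : Set G)).inv_mem (h hb))) a
    simpa using this.mp ha
  · rintro ⟨b, hb, a, ha, rfl⟩
    refine ⟨b * a * b⁻¹, ?_, b, hb, by group⟩
    exact ((Subgroup.mem_normalizer_iff.mp (h hb)) a).mp ha

lemma coe_mul_coe_of_le {G : Type*} [Group G] {P Q : Subgroup G} (h : P ≤ Q) :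
    (P : Set G) * Q = (Q : Set G) := by
  apply subset_antisymm
  · rintro x ⟨a, ha, b, hb, rfl⟩; exact mul_mem (h ha) hb
  · intro x hx; exact ⟨1, P.one_mem, x, hx, one_mul x⟩

lemma coe_mul_coe_of_le' {G : Type*} [Group G] {P Q : Subgroup G} (h : P ≤ Q) :
    (Q : Set G) * P = (Q : Set G) := by
  apply subset_antisymm
  · rintro x ⟨a, ha, b, hb, rfl⟩; exact mul_mem ha (h hb)
  · intro x hx; exact ⟨x, hx, 1, P.one_mem, mul_one x⟩

lemma normal_pGroup_le_sylow {G : Type*} [Group G] [Finite G] {p : ℕ} [Fact p.Prime]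
    {M : Subgroup G} (hM : IsPGroup p M) [hMn : M.Normal] (Q : Sylow p G) :
    M ≤ Q := by
  obtain ⟨R, hMR⟩ := hM.exists_le_sylow
  obtain ⟨g, rfl⟩ := MulAction.exists_smul_eq G R Q
  intro x hx
  have h1 : (MulAut.conj g)⁻¹ x ∈ M := by
    have : g⁻¹ * x * g ∈ M := by
      have := hMn.conj_mem x hx g⁻¹
      simpa using this
    simpa [MulAut.conj_inv_apply] using this
  have : x ∈ MulAut.conj g • (R : Subgroup G) :=
    Subgroup.mem_pointwise_smul_iff_inv_smul_mem.mpr (hMR h1)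
  rwa [← Sylow.coe_subgroup_smul] at this

/-- A `p`-subgroup `P` of a finite group `G` is s-permutable in `G` if and only if
`O^p(G) ≤ N_G(P)`. -/
theorem isSPermutable_iff_pResidual_le_normalizer {G : Type*} [Group G] [Finite G]
    {p : ℕ} (hp : p.Prime) (P : Subgroup G) (hP : IsPGroup p P) :
    IsSPermutable P ↔ pResidual p G ≤ Subgroup.normalizer (P : Set G) := by
  haveI : Fact p.Prime := ⟨hp⟩
  constructor
  · intro hSP
    -- P is contained in every Sylow p-subgroup
    have hA : ∀ S : Sylow p G, P ≤ (S : Subgroup G) := by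
      intro S
      have hcoe := coe_sup_of_mul_comm (hSP p hp S)
      have hcard : Nat.card ↥(P ⊔ (S : Subgroup G)) ∣
          Nat.card P * Nat.card (S : Subgroup G) := by
        have hd := card_coe_mul_dvd P (S : Subgroup G)
        rw [← hcoe] at hd
        simpa using hd
      obtain ⟨a, hPa⟩ := IsPGroup.iff_card.mp hP
      obtain ⟨b, hSb⟩ := IsPGroup.iff_card.mp S.2
      rw [hPa, hSb, ← pow_add] at hcard
      obtain ⟨c, -, hc⟩ := (Nat.dvd_prime_pow hp).mp hcard
      have hJp : IsPGroup p ↥(P ⊔ (S : Subgroup G)) := IsPGroup.iff_card.mpr ⟨c, hc⟩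
      have hmax := S.3 hJp le_sup_right
      exact le_sup_left.trans hmax.le
    set Opg : Subgroup G := ⨅ S : Sylow p G, (S : Subgroup G) with hOpg
    have hPO : P ≤ Opg := le_iInf hA
    have hOpP : IsPGroup p ↥Opg := by
      obtain ⟨S₀⟩ : Nonempty (Sylow p G) := inferInstance
      exact S₀.2.to_le (iInf_le _ S₀)
    have hOpN : Opg.Normal := by
      constructor
      intro n hn g
      rw [hOpg, Subgroup.mem_iInf] at hn ⊢
      intro S
      have h1 := hn (g⁻¹ • S)
      rw [Sylow.coe_subgroup_smul] at h1
      have h2 := Subgroup.mem_pointwise_smul_iff_inv_smul_mem.mp h1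
      simpa [MulAut.conj_inv_apply] using h2
    -- every Sylow q-subgroup (q ≠ p) normalizes P
    have hB : ∀ (q : ℕ), q.Prime → q ≠ p → ∀ Q : Sylow q G,
        (Q : Subgroup G) ≤ Subgroup.normalizer (P : Set G) := by
      intro q hq hqp Q
      haveI : Fact q.Prime := ⟨hq⟩
      have hcoe := coe_sup_of_mul_comm (hSP q hq Q)
      set N : Subgroup G := P ⊔ (Q : Subgroup G) with hN
      have hcardN : Nat.card ↥N ∣ Nat.card P * Nat.card (Q : Subgroup G) := by
        have hd := card_coe_mul_dvd P (Q : Subgroup G)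
        rw [← hcoe] at hd
        simpa using hd
      obtain ⟨a, hPa⟩ := IsPGroup.iff_card.mp hP
      obtain ⟨b, hQb⟩ := IsPGroup.iff_card.mp Q.2
      set D : Subgroup G := N ⊓ Opg with hD
      have hPD : P ≤ D := le_inf le_sup_left hPO
      have hDp : IsPGroup p ↥D := hOpP.to_le inf_le_right
      obtain ⟨m, hm⟩ := IsPGroup.iff_card.mp hDp
      have h1 : Nat.card ↥D ∣ Nat.card ↥N := Subgroup.card_dvd_of_le inf_le_left
      have h2 : Nat.card ↥D ∣ Nat.card P * Nat.card (Q : Subgroup G) := h1.trans hcardN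
      have hcop : Nat.Coprime (p ^ m) (q ^ b) :=
        Nat.Coprime.pow _ _ ((Nat.coprime_primes hp hq).mpr (Ne.symm hqp))
      have h3 : Nat.card ↥D ∣ Nat.card ↥P := by
        rw [hm, hQb] at h2
        rw [hm]
        exact hcop.dvd_of_dvd_mul_right h2
      have h4 : Nat.card ↥P ∣ Nat.card ↥D := Subgroup.card_dvd_of_le hPD
      have hPeq : P = D :=
        Subgroup.eq_of_le_of_card_ge hPD (Nat.dvd_antisymm h3 h4).le
      intro x hx
      have hxN : x ∈ N := Subgroup.mem_sup_right hx
      rw [Subgroup.mem_normalizer_iff]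
      intro h
      constructor
      · intro hh
        have hhD : h ∈ D := hPeq ▸ hh
        obtain ⟨hhN, hhO⟩ := Subgroup.mem_inf.mp hhD
        have : x * h * x⁻¹ ∈ D :=
          Subgroup.mem_inf.mpr ⟨N.mul_mem (N.mul_mem hxN hhN) (N.inv_mem hxN),
            hOpN.conj_mem h hhO x⟩
        rw [← hPeq] at this
        exact this
      · intro hh
        have hhD : x * h * x⁻¹ ∈ D := hPeq ▸ hh
        obtain ⟨hhN, hhO⟩ := Subgroup.mem_inf.mp hhD
        have hN' : h ∈ N := by
          have := N.mul_mem (N.mul_mem (N.inv_mem hxN) hhN) hxN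
          simpa [mul_assoc] using this
        have hO' : h ∈ Opg := by
          have := hOpN.conj_mem _ hhO x⁻¹
          simpa [mul_assoc] using this
        rw [hPeq]
        exact Subgroup.mem_inf.mpr ⟨hN', hO'⟩
    -- the subgroup generated by all Sylow q-subgroups, q ≠ p
    set HH : Subgroup G :=
      ⨆ (q : ℕ) (_ : q.Prime) (_ : q ≠ p) (Q : Sylow q G), (Q : Subgroup G) with hHH
    have hHle : HH ≤ Subgroup.normalizer (P : Set G) :=
      iSup_le fun q => iSup_le fun hq => iSup_le fun hqp => iSup_le fun Q => hB q hq hqp Q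
    have hHmap : ∀ g : G, Subgroup.map (MulAut.conj g).toMonoidHom HH = HH := by
      intro g
      have key : ∀ (g : G), Subgroup.map (MulAut.conj g).toMonoidHom HH ≤ HH := by
        intro g
        rw [hHH]
        simp only [Subgroup.map_iSup]
        refine iSup_le fun q => iSup_le fun hq => iSup_le fun hqp => iSup_le fun Q => ?_
        have : Subgroup.map (MulAut.conj g).toMonoidHom (Q : Subgroup G)
            = ((g • Q : Sylow q G) : Subgroup G) := by
          rw [Sylow.coe_subgroup_smul, Subgroup.pointwise_smul_def]
          rfl
        rw [this]
        exact le_iSup_of_le q (le_iSup_of_le hq (le_iSup_of_le hqp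
          (le_iSup (fun Q : Sylow q G => (Q : Subgroup G)) (g • Q))))
      refine le_antisymm (key g) ?_
      intro x hx
      have := key g⁻¹ (Subgroup.mem_map_of_mem _ hx)
      rw [Subgroup.mem_map]
      refine ⟨(MulAut.conj g⁻¹) x, this, ?_⟩
      simp [MulAut.conj_apply]
      group
    have hHnorm : HH.Normal := by
      constructor
      intro n hn g
      have : (MulAut.conj g) n ∈ Subgroup.map (MulAut.conj g).toMonoidHom HH :=
        Subgroup.mem_map_of_mem _ hn
      rw [hHmap g] at this
      simpa [MulAut.conj_apply] using this
    have hHidx : ∃ k, HH.index = p ^ k := by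
      have hn0 : HH.index ≠ 0 := Subgroup.index_ne_zero_of_finite
      refine ⟨HH.index.primeFactorsList.length,
        Nat.eq_prime_pow_of_unique_prime_dvd hn0 ?_⟩
      intro d hd hdvd
      by_contra hdp
      haveI : Fact d.Prime := ⟨hd⟩
      obtain ⟨Q⟩ : Nonempty (Sylow d G) := inferInstance
      have hQH : (Q : Subgroup G) ≤ HH :=
        le_iSup_of_le d (le_iSup_of_le hd (le_iSup_of_le hdp
          (le_iSup (fun Q : Sylow d G => (Q : Subgroup G)) Q)))
      have h1 : Nat.card ↥(Q : Subgroup G) ∣ Nat.card ↥HH := Subgroup.card_dvd_of_le hQH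
      have h2 : Nat.card ↥HH * HH.index = Nat.card G := Subgroup.card_mul_index HH
      have hcardQ : Nat.card ↥(Q : Subgroup G) = d ^ (Nat.card G).factorization d :=
        Sylow.card_eq_multiplicity Q
      have hdd : d ^ ((Nat.card G).factorization d + 1) ∣ Nat.card G := by
        have h5 : d ^ (Nat.card G).factorization d * d ∣ Nat.card ↥HH * HH.index :=
          Nat.mul_dvd_mul (hcardQ ▸ h1) hdvd
        rw [h2] at h5
        rwa [pow_succ]
      have hG0 : Nat.card G ≠ 0 := Nat.card_pos.ne'
      have := (Nat.Prime.pow_dvd_iff_le_factorization hd hG0).mp hdd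
      omega
    exact le_trans (sInf_le ⟨hHnorm, hHidx⟩) hHle
  · intro hle
    have hKn : (pResidual p G).Normal := by
      constructor
      intro n hn g
      refine Subgroup.mem_sInf.mpr fun N hN => hN.1.conj_mem n (Subgroup.mem_sInf.mp hn N hN) g
    haveI := hKn
    intro q hq Q
    by_cases hqp : q = p
    · subst hqp
      -- show P ≤ Q
      obtain ⟨Q₀, hPQ₀⟩ := hP.exists_le_sylow
      have hKquot : IsPGroup q (G ⧸ pResidual q G) := by
        intro x
        obtain ⟨g, rfl⟩ := QuotientGroup.mk_surjective x
        have hg0 : orderOf g ≠ 0 := (orderOf_pos g).ne'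
        refine ⟨(orderOf g).factorization q, ?_⟩
        have hmem : g ^ q ^ ((orderOf g).factorization q) ∈ pResidual q G := by
          refine Subgroup.mem_sInf.mpr fun N hN => ?_
          obtain ⟨hNnorm, k, hk⟩ := hN
          haveI := hNnorm
          have h1 : orderOf ((g : G ⧸ N)) ∣ q ^ k := by
            have := orderOf_dvd_natCard ((g : G ⧸ N))
            rwa [← Subgroup.index_eq_card, hk] at this
          obtain ⟨j, hj, hje⟩ := (Nat.dvd_prime_pow hq).mp h1
          have h2 : (q : ℕ) ^ j ∣ orderOf g := by
            rw [← hje]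
            exact (orderOf_map_dvd (QuotientGroup.mk' N) g)
          have h3 : j ≤ (orderOf g).factorization q :=
            (Nat.Prime.pow_dvd_iff_le_factorization hq hg0).mp h2
          have h4 : orderOf ((g : G ⧸ N)) ∣ q ^ ((orderOf g).factorization q) := by
            rw [hje]; exact pow_dvd_pow q h3
          have h5 : ((g : G ⧸ N)) ^ q ^ ((orderOf g).factorization q) = 1 :=
            orderOf_dvd_iff_pow_eq_one.mp h4
          rwa [← QuotientGroup.mk_pow, QuotientGroup.eq_one_iff] at h5
        rw [← QuotientGroup.mk_pow]
        exact (QuotientGroup.eq_one_iff _).mpr hmem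
      have hKidx : ∃ nn, (pResidual q G).index = q ^ nn := by
        obtain ⟨nn, hnn⟩ := IsPGroup.iff_card.mp hKquot
        exact ⟨nn, by rw [Subgroup.index_eq_card]; exact hnn⟩
      have hT : (Q₀ : Subgroup G) ⊔ pResidual q G = ⊤ := by
        obtain ⟨nn, hnn⟩ := hKidx
        have h1 : ((Q₀ : Subgroup G) ⊔ pResidual q G).index ∣ (pResidual q G).index :=
          Subgroup.index_dvd_of_le le_sup_right
        have h2 : ((Q₀ : Subgroup G) ⊔ pResidual q G).index ∣ (Q₀ : Subgroup G).index :=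
          Subgroup.index_dvd_of_le le_sup_left
        rw [hnn] at h1
        obtain ⟨j, hj, hje⟩ := (Nat.dvd_prime_pow hq).mp h1
        rcases Nat.eq_zero_or_pos j with hj0 | hj1
        · rw [← Subgroup.index_eq_one, hje, hj0, pow_zero]
        · exfalso
          apply Sylow.not_dvd_index Q₀
          refine dvd_trans ?_ h2
          rw [hje]
          exact dvd_pow_self q hj1.ne'
      have hPle : P ≤ (Q : Subgroup G) := by
        set M := Subgroup.normalClosure (P : Set G) with hM
        have hMQ₀ : M ≤ (Q₀ : Subgroup G) := by
          rw [hM, Subgroup.normalClosure]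
          refine (Subgroup.closure_le _).mpr ?_
          intro a ha
          obtain ⟨b, hb, hconj⟩ := Group.mem_conjugatesOfSet_iff.mp ha
          obtain ⟨c, hc⟩ := isConj_iff.mp hconj
          have hcT : c ∈ ((Q₀ : Subgroup G) ⊔ pResidual q G : Subgroup G) := by
            rw [hT]; exact Subgroup.mem_top c
          rw [← SetLike.mem_coe, Subgroup.mul_normal] at hcT
          obtain ⟨x, hx, y, hy, rfl⟩ := hcT
          have hyb : y * b * y⁻¹ ∈ P :=
            ((Subgroup.mem_normalizer_iff.mp (hle hy)) b).mp hb
          have h6 : x * (y * b * y⁻¹) * x⁻¹ ∈ (Q₀ : Subgroup G) :=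
            Subgroup.mul_mem _ (Subgroup.mul_mem _ hx (hPQ₀ hyb)) (Subgroup.inv_mem _ hx)
          have h7 : (x * y) * b * (x * y)⁻¹ ∈ (Q₀ : Subgroup G) := by
            have heq : (x * y) * b * (x * y)⁻¹ = x * (y * b * y⁻¹) * x⁻¹ := by group
            rw [heq]; exact h6
          rw [hc] at h7
          exact h7
        have hMp : IsPGroup q ↥M := Q₀.2.to_le hMQ₀
        haveI : M.Normal := Subgroup.normalClosure_normal
        have hMR : M ≤ (Q : Subgroup G) := normal_pGroup_le_sylow hMp Q
        exact le_trans Subgroup.le_normalClosure hMR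
      rw [coe_mul_coe_of_le hPle, coe_mul_coe_of_le' hPle]
    · have hQK : (Q : Subgroup G) ≤ pResidual p G := by
        intro x hx
        refine Subgroup.mem_sInf.mpr fun N hN => ?_
        obtain ⟨hNnorm, k, hk⟩ := hN
        haveI := hNnorm
        obtain ⟨n, hn⟩ := Q.2 ⟨x, hx⟩
        have hxo : x ^ q ^ n = 1 := by
          have := congrArg (Subgroup.subtype (Q : Subgroup G)) hn
          simpa using this
        have hdvd1 : orderOf ((x : G ⧸ N)) ∣ q ^ n :=
          (orderOf_map_dvd (QuotientGroup.mk' N) x).trans (orderOf_dvd_of_pow_eq_one hxo)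
        have hdvd2 : orderOf ((x : G ⧸ N)) ∣ p ^ k := by
          have := orderOf_dvd_natCard ((x : G ⧸ N))
          rwa [← Subgroup.index_eq_card, hk] at this
        have hcop : Nat.Coprime (q ^ n) (p ^ k) :=
          Nat.Coprime.pow _ _ ((Nat.coprime_primes hq hp).mpr hqp)
        have h1 : orderOf ((x : G ⧸ N)) = 1 :=
          Nat.dvd_one.mp (hcop ▸ Nat.dvd_gcd hdvd1 hdvd2)
        have h2 : ((x : G ⧸ N)) = 1 := orderOf_eq_one_iff.mp h1
        exact (QuotientGroup.eq_one_iff x).mp h2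
      exact coe_mul_comm_of_le_normalizer (hQK.trans hle)
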